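/- Let n ≥ 2 be an integer and σ ∈ (0,1). Let Ω ⊂ ℝ^{n+1}_+ be open and let U be a C² function on Ω satisfying ΔU(X) + ((1−2σ)/t)·∂_t U(X) = 0 for all X = (x,t) ∈ Ω. Fix x̄ ∈ ℝⁿ and λ > 0, set X̄ = (x̄, 0), and define the inversion I(ξ) = X̄ + λ²(ξ − X̄)/|ξ − X̄|² (which maps ℝ^{n+1}_+ \ {X̄} to itself, since X̄ lies on the boundary hyperplane {t = 0}) and the Kelvin transform U_{X̄,λ}(ξ) := (λ/|ξ − X̄|)^{n−2σ} · U(I(ξ)). Then U_{X̄,λ} satisfies the same degenerate equation Δ U_{X̄,λ}(ξ) + ((1−2σ)/s)·∂_s U_{X̄,λ}(ξ) = 0 for all ξ = (y,s) in the open set {ξ ∈ ℝ^{n+1}_+ : ξ ≠ X̄, I(ξ) ∈ Ω}. -/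

import Mathlib

open scoped Topology MeasureTheory RealInnerProductSpace
open Filter MeasureTheory

noncomputable section

/-- Points of `ℝ^{n+1}`, written `X = (x, t)` with `x ∈ ℝⁿ` and `t ∈ ℝ`. -/
abbrev Pt (n : ℕ) := EuclideanSpace ℝ (Fin n) × ℝ

/-- The Euclidean norm on `ℝ^{n+1} = ℝⁿ × ℝ`. -/
def enorm' {n : ℕ} (X : Pt n) : ℝ := Real.sqrt (‖X.1‖ ^ 2 + X.2 ^ 2)

/-- Partial derivative in the last (`t`) direction. -/
def dt {n : ℕ} (U : Pt n → ℝ) (X : Pt n) : ℝ := fderiv ℝ U X (0, 1)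

/-- Second derivative in the direction `v`. -/
def d2 {n : ℕ} (U : Pt n → ℝ) (X v : Pt n) : ℝ :=
  fderiv ℝ (fun Y => fderiv ℝ U Y v) X v

/-- The Laplacian on `ℝ^{n+1}`. -/
def lapl {n : ℕ} (U : Pt n → ℝ) (X : Pt n) : ℝ :=
  (∑ i : Fin n, d2 U X (EuclideanSpace.single i (1 : ℝ), (0 : ℝ))) + d2 U X (0, 1)

/-- `U` is a nonnegative solution of the extension problem on the punctured half-ball
`𝔅_R^+`: it is nonnegative and continuous on `{|X| ≤ R, t ≥ 0} \ {0}`, `C²` on `𝔅_R^+`,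
satisfies `ΔU + ((1-2σ)/t) ∂_t U = 0` there, and satisfies the nonlinear Neumann condition
`lim_{t→0⁺} t^{1-2σ} ∂_t U(x,t) = -u(x)^{(n+2σ)/(n-2σ)}` for `x ∈ B_R \ {0}`. -/
def ExtSol (n : ℕ) (σ R : ℝ) (U : Pt n → ℝ) : Prop :=
  (∀ X : Pt n, enorm' X ≤ R → 0 ≤ X.2 → X ≠ 0 → 0 ≤ U X) ∧
  ContinuousOn U ({X : Pt n | enorm' X ≤ R ∧ 0 ≤ X.2} \ {0}) ∧
  ContDiffOn ℝ 2 U {X : Pt n | enorm' X < R ∧ 0 < X.2} ∧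
  (∀ X : Pt n, enorm' X < R → 0 < X.2 →
    lapl U X + ((1 - 2 * σ) / X.2) * dt U X = 0) ∧
  (∀ x : EuclideanSpace ℝ (Fin n), ‖x‖ < R → x ≠ 0 →
    Tendsto (fun t : ℝ => t ^ (1 - 2 * σ) * dt U (x, t)) (𝓝[>] 0)
      (𝓝 (-(U (x, 0) ^ (((n : ℝ) + 2 * σ) / ((n : ℝ) - 2 * σ))))))

/-- The inversion of `ℝ^{n+1}_+` with respect to the sphere of radius `lam` centered at
`X̄ = (x̄, 0)` on the boundary hyperplane. -/
def inversion {n : ℕ} (xb : EuclideanSpace ℝ (Fin n)) (lam : ℝ) (ξ : Pt n) : Pt n :=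
  ((xb, (0 : ℝ)) : Pt n) + (lam ^ 2 / enorm' (ξ - (xb, (0 : ℝ))) ^ 2) • (ξ - (xb, (0 : ℝ)))

/-- The Kelvin transform `U_{X̄,λ}(ξ) = (λ/|ξ-X̄|)^{n-2σ} U(X̄ + λ²(ξ-X̄)/|ξ-X̄|²)`. -/
def kelvin {n : ℕ} (σ : ℝ) (U : Pt n → ℝ) (xb : EuclideanSpace ℝ (Fin n)) (lam : ℝ)
    (ξ : Pt n) : ℝ :=
  (lam / enorm' (ξ - (xb, (0 : ℝ)))) ^ ((n : ℝ) - 2 * σ) * U (inversion xb lam ξ)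

namespace S14

open ContinuousLinearMap

variable {n : ℕ}

def cp (xb : EuclideanSpace ℝ (Fin n)) : Pt n := ((xb, (0 : ℝ)) : Pt n)

def ipp (a b : Pt n) : ℝ := (inner ℝ a.1 b.1 : ℝ) + a.2 * b.2

def ippL (a : Pt n) : Pt n →L[ℝ] ℝ :=
  ((innerSL ℝ a.1).comp (ContinuousLinearMap.fst ℝ (EuclideanSpace ℝ (Fin n)) ℝ)) +
    a.2 • (ContinuousLinearMap.snd ℝ (EuclideanSpace ℝ (Fin n)) ℝ)

@[simp] lemma ippL_apply (a w : Pt n) : ippL a w = ipp a w := by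
  simp [ippL, ipp]

lemma ipp_comm (a b : Pt n) : ipp a b = ipp b a := by
  simp [ipp, real_inner_comm, mul_comm]

def qf (xb : EuclideanSpace ℝ (Fin n)) (Y : Pt n) : ℝ := ‖Y.1 - xb‖ ^ 2 + Y.2 ^ 2

lemma qf_nonneg (xb : EuclideanSpace ℝ (Fin n)) (Y : Pt n) : 0 ≤ qf xb Y := by
  simp only [qf]; positivity

lemma sub_cp_fst (xb : EuclideanSpace ℝ (Fin n)) (Y : Pt n) : (Y - cp xb).1 = Y.1 - xb := rfl
lemma sub_cp_snd (xb : EuclideanSpace ℝ (Fin n)) (Y : Pt n) : (Y - cp xb).2 = Y.2 - 0 := rfl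

lemma enorm'_sub_sq (xb : EuclideanSpace ℝ (Fin n)) (Y : Pt n) :
    enorm' (Y - cp xb) ^ 2 = qf xb Y := by
  rw [enorm', sub_cp_fst, sub_cp_snd, sub_zero, Real.sq_sqrt (by positivity)]
  rfl

lemma inversion_eq (xb : EuclideanSpace ℝ (Fin n)) (lam : ℝ) (Y : Pt n) :
    inversion xb lam Y = cp xb + (lam ^ 2 / qf xb Y) • (Y - cp xb) := by
  rw [inversion, ← enorm'_sub_sq xb Y]; rfl

lemma qf_eq_ipp (xb : EuclideanSpace ℝ (Fin n)) (Y : Pt n) :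
    qf xb Y = ipp (Y - cp xb) (Y - cp xb) := by
  rw [ipp, real_inner_self_eq_norm_sq, sub_cp_fst, sub_cp_snd, sub_zero, qf]
  ring

lemma continuous_qf (xb : EuclideanSpace ℝ (Fin n)) : Continuous (qf xb) := by
  unfold qf; fun_prop

lemma hasFDerivAt_qf (xb : EuclideanSpace ℝ (Fin n)) (Y : Pt n) :
    HasFDerivAt (qf xb) ((2 : ℝ) • ippL (Y - cp xb)) Y := by
  have h1 : HasFDerivAt (fun Y : Pt n => Y.1 - xb)
      (ContinuousLinearMap.fst ℝ (EuclideanSpace ℝ (Fin n)) ℝ) Y :=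
    (hasFDerivAt_fst).sub_const xb
  have h2 : HasFDerivAt (fun Y : Pt n => (inner ℝ (Y.1 - xb) (Y.1 - xb) : ℝ)) _ Y :=
    h1.inner ℝ h1
  have h3 : HasFDerivAt (fun Y : Pt n => Y.2 * Y.2) _ Y :=
    (hasFDerivAt_snd (𝕜 := ℝ)).mul (hasFDerivAt_snd (𝕜 := ℝ))
  have h4 : HasFDerivAt (fun Y : Pt n => (inner ℝ (Y.1 - xb) (Y.1 - xb) : ℝ) + Y.2 * Y.2) _ Y :=
    h2.add h3
  have he : (fun Y : Pt n => (inner ℝ (Y.1 - xb) (Y.1 - xb) : ℝ) + Y.2 * Y.2) = qf xb := by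
    funext Z; rw [real_inner_self_eq_norm_sq, qf]; ring
  rw [he] at h4
  refine h4.congr_fderiv (ContinuousLinearMap.ext fun w => ?_)
  simp only [ContinuousLinearMap.add_apply, ContinuousLinearMap.comp_apply,
    ContinuousLinearMap.prod_apply, fderivInnerCLM_apply, ContinuousLinearMap.smul_apply,
    ContinuousLinearMap.coe_fst', ContinuousLinearMap.coe_snd', ippL_apply, ipp,
    sub_cp_fst, sub_cp_snd, sub_zero, smul_eq_mul]
  rw [real_inner_comm (w.1) (Y.1 - xb)]
  ring

lemma hasFDerivAt_inversion (xb : EuclideanSpace ℝ (Fin n)) (lam : ℝ) (Y : Pt n)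
    (hq : 0 < qf xb Y) :
    ∃ DI : Pt n →L[ℝ] Pt n, HasFDerivAt (inversion xb lam) DI Y ∧ ∀ w, DI w =
      (lam ^ 2 / qf xb Y) • w -
        ((2 * lam ^ 2 * ipp (Y - cp xb) w) / (qf xb Y) ^ 2) • (Y - cp xb) := by
  have hne : qf xb Y ≠ 0 := ne_of_gt hq
  have hdiv : HasFDerivAt (fun Z : Pt n => lam ^ 2 * (qf xb Z)⁻¹) _ Y :=
    (((hasFDerivAt_inv hne).comp Y (hasFDerivAt_qf xb Y)).const_mul (lam ^ 2))
  have hz : HasFDerivAt (fun Z : Pt n => Z - cp xb)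
      (ContinuousLinearMap.id ℝ (Pt n)) Y := (hasFDerivAt_id Y).sub_const _
  have h : HasFDerivAt (fun Z : Pt n => cp xb + (lam ^ 2 * (qf xb Z)⁻¹) • (Z - cp xb)) _ Y :=
    (hdiv.smul hz).const_add (cp xb)
  have he : (fun Z : Pt n => cp xb + (lam ^ 2 * (qf xb Z)⁻¹) • (Z - cp xb)) =
      inversion xb lam := by
    funext Z; rw [inversion_eq, div_eq_mul_inv]
  rw [he] at h
  refine ⟨_, h, fun w => ?_⟩
  simp only [ContinuousLinearMap.add_apply, ContinuousLinearMap.smul_apply,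
    ContinuousLinearMap.coe_comp', Function.comp_apply, ContinuousLinearMap.smulRight_apply,
    ContinuousLinearMap.coe_id', id_eq, ContinuousLinearMap.one_apply, ippL_apply,
    ContinuousLinearMap.toSpanSingleton_apply, smul_eq_mul, div_eq_mul_inv]
  module

lemma enorm'_sub (xb : EuclideanSpace ℝ (Fin n)) (Y : Pt n) :
    enorm' (Y - cp xb) = Real.sqrt (qf xb Y) := by
  rw [enorm', sub_cp_fst, sub_cp_snd, sub_zero]; rfl

lemma kelvin_eq (σ : ℝ) (U : Pt n → ℝ) (xb : EuclideanSpace ℝ (Fin n)) {lam : ℝ}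
    (hlam : 0 < lam) (Y : Pt n) (hq : 0 < qf xb Y) :
    kelvin σ U xb lam Y = lam ^ ((n : ℝ) - 2 * σ) *
      ((qf xb Y) ^ (-(((n : ℝ) - 2 * σ) / 2)) * U (inversion xb lam Y)) := by
  rw [kelvin, show (Y - ((xb, (0:ℝ)) : Pt n)) = Y - cp xb from rfl, enorm'_sub,
    Real.div_rpow hlam.le (Real.sqrt_nonneg _), Real.sqrt_eq_rpow,
    ← Real.rpow_mul (qf_nonneg xb Y), div_eq_mul_inv, ← Real.rpow_neg (qf_nonneg xb Y),
    show -(1/2 * ((n : ℝ) - 2 * σ)) = -(((n : ℝ) - 2 * σ) / 2) by ring, mul_assoc]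

lemma hasFDerivAt_kelvin (σ : ℝ) (U : Pt n → ℝ) (xb : EuclideanSpace ℝ (Fin n)) {lam : ℝ}
    (hlam : 0 < lam) {Ω : Set (Pt n)} (hΩopen : IsOpen Ω) (hU : ContDiffOn ℝ 2 U Ω)
    (Y : Pt n) (hq : 0 < qf xb Y) (hY : inversion xb lam Y ∈ Ω) :
    ∃ D : Pt n →L[ℝ] ℝ, HasFDerivAt (kelvin σ U xb lam) D Y ∧ ∀ w, D w =
      lam ^ ((n : ℝ) - 2 * σ) * (2 * (-(((n : ℝ) - 2 * σ) / 2))) *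
        ((qf xb Y) ^ ((-(((n : ℝ) - 2 * σ) / 2)) - 1) *
          (ipp (Y - cp xb) w * U (inversion xb lam Y)))
      + lam ^ ((n : ℝ) - 2 * σ) * lam ^ 2 *
        ((qf xb Y) ^ ((-(((n : ℝ) - 2 * σ) / 2)) - 1) *
          fderiv ℝ U (inversion xb lam Y) w)
      - lam ^ ((n : ℝ) - 2 * σ) * (2 * lam ^ 2) *
        ((qf xb Y) ^ ((-(((n : ℝ) - 2 * σ) / 2)) - 2) *
          (ipp (Y - cp xb) w * fderiv ℝ U (inversion xb lam Y) (Y - cp xb))) := by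
  set m : ℝ := (n : ℝ) - 2 * σ with hm
  set e : ℝ := -(((n : ℝ) - 2 * σ) / 2) with he
  have hne : qf xb Y ≠ 0 := ne_of_gt hq
  have hUd : HasFDerivAt U (fderiv ℝ U (inversion xb lam Y)) (inversion xb lam Y) :=
    (((hU.contDiffAt (hΩopen.mem_nhds hY)).differentiableAt (by norm_num)).hasFDerivAt)
  obtain ⟨DI, hI, hIw⟩ := hasFDerivAt_inversion xb lam Y hq
  have hu0 : HasFDerivAt (fun Z => U (inversion xb lam Z))
      ((fderiv ℝ U (inversion xb lam Y)).comp DI) Y := hUd.comp Y hI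
  have hrp : HasFDerivAt (fun Z : Pt n => (qf xb Z) ^ e)
      ((e * (qf xb Y) ^ (e - 1)) • ((2 : ℝ) • ippL (Y - cp xb))) Y :=
    (hasFDerivAt_qf xb Y).rpow_const (Or.inl hne)
  have h := (hrp.mul hu0).const_mul (lam ^ m)
  have hopen : IsOpen {Z : Pt n | 0 < qf xb Z} := isOpen_lt continuous_const (continuous_qf xb)
  have hev : kelvin σ U xb lam =ᶠ[𝓝 Y]
      (fun Z => lam ^ m * ((qf xb Z) ^ e * U (inversion xb lam Z))) :=
    eventually_of_mem (hopen.mem_nhds hq) (fun Z hZ => kelvin_eq σ U xb hlam Z hZ)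
  refine ⟨_, h.congr_of_eventuallyEq hev, fun w => ?_⟩
  have hq1 : (qf xb Y) ^ (e - 1) = (qf xb Y) ^ e / qf xb Y := Real.rpow_sub_one hne e
  have hq2 : (qf xb Y) ^ (e - 2) = (qf xb Y) ^ e / (qf xb Y) ^ 2 := by
    rw [Real.rpow_sub hq, Real.rpow_two, sq]
  simp only [ContinuousLinearMap.smul_apply, ContinuousLinearMap.add_apply,
    ContinuousLinearMap.comp_apply, ContinuousLinearMap.coe_comp', Function.comp_apply,
    ippL_apply, smul_eq_mul, hIw, map_sub, _root_.map_smul]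
  rw [hq1, hq2]
  field_simp
  ring

lemma fderiv_kelvin (σ : ℝ) (U : Pt n → ℝ) (xb : EuclideanSpace ℝ (Fin n)) {lam : ℝ}
    (hlam : 0 < lam) {Ω : Set (Pt n)} (hΩopen : IsOpen Ω) (hU : ContDiffOn ℝ 2 U Ω)
    (Y : Pt n) (hq : 0 < qf xb Y) (hY : inversion xb lam Y ∈ Ω) (w : Pt n) :
    fderiv ℝ (kelvin σ U xb lam) Y w =
      lam ^ ((n : ℝ) - 2 * σ) * (2 * (-(((n : ℝ) - 2 * σ) / 2))) *
        ((qf xb Y) ^ ((-(((n : ℝ) - 2 * σ) / 2)) - 1) *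
          (ipp (Y - cp xb) w * U (inversion xb lam Y)))
      + lam ^ ((n : ℝ) - 2 * σ) * lam ^ 2 *
        ((qf xb Y) ^ ((-(((n : ℝ) - 2 * σ) / 2)) - 1) *
          fderiv ℝ U (inversion xb lam Y) w)
      - lam ^ ((n : ℝ) - 2 * σ) * (2 * lam ^ 2) *
        ((qf xb Y) ^ ((-(((n : ℝ) - 2 * σ) / 2)) - 2) *
          (ipp (Y - cp xb) w * fderiv ℝ U (inversion xb lam Y) (Y - cp xb))) := by
  obtain ⟨D, hD, hw⟩ := hasFDerivAt_kelvin σ U xb hlam hΩopen hU Y hq hY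
  rw [hD.fderiv]; exact hw w


lemma hasFDerivAt_ipp (xb : EuclideanSpace ℝ (Fin n)) (v Y : Pt n) :
    HasFDerivAt (fun Z : Pt n => ipp (Z - cp xb) v) (ippL v) Y := by
  have h1 : HasFDerivAt (fun Z : Pt n => Z.1 - xb)
      (ContinuousLinearMap.fst ℝ (EuclideanSpace ℝ (Fin n)) ℝ) Y :=
    (hasFDerivAt_fst).sub_const xb
  have h2 : HasFDerivAt (fun Z : Pt n => (inner ℝ (Z.1 - xb) v.1 : ℝ)) _ Y :=
    h1.inner ℝ (hasFDerivAt_const v.1 Y)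
  have h3 : HasFDerivAt (fun Z : Pt n => (Z.2 - 0) * v.2) _ Y :=
    ((hasFDerivAt_snd (𝕜 := ℝ)).sub_const (0:ℝ)).mul_const v.2
  have h4 : HasFDerivAt (fun Z : Pt n => (inner ℝ (Z.1 - xb) v.1 : ℝ) + (Z.2 - 0) * v.2) _ Y :=
    h2.add h3
  have he : (fun Z : Pt n => (inner ℝ (Z.1 - xb) v.1 : ℝ) + (Z.2 - 0) * v.2) =
      (fun Z : Pt n => ipp (Z - cp xb) v) := rfl
  rw [he] at h4
  refine h4.congr_fderiv (ContinuousLinearMap.ext fun w => ?_)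
  simp only [ContinuousLinearMap.add_apply, ContinuousLinearMap.comp_apply,
    ContinuousLinearMap.prod_apply, fderivInnerCLM_apply, ContinuousLinearMap.smul_apply,
    ContinuousLinearMap.coe_fst', ContinuousLinearMap.coe_snd', ippL_apply, ipp,
    ContinuousLinearMap.zero_apply, ContinuousLinearMap.smulRight_apply,
    ContinuousLinearMap.one_apply, smul_eq_mul, ContinuousLinearMap.mul_apply']
  rw [real_inner_comm (w.1) v.1]
  simp

lemma isOpen_W (xb : EuclideanSpace ℝ (Fin n)) (lam : ℝ) {Ω : Set (Pt n)}
    (hΩopen : IsOpen Ω) :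
    IsOpen {Z : Pt n | 0 < qf xb Z ∧ inversion xb lam Z ∈ Ω} := by
  have hopen : IsOpen {Z : Pt n | 0 < qf xb Z} :=
    isOpen_lt continuous_const (continuous_qf xb)
  have hco : ContinuousOn (inversion xb lam) {Z : Pt n | 0 < qf xb Z} := by
    have : ∀ Z ∈ {Z : Pt n | 0 < qf xb Z}, inversion xb lam Z =
        cp xb + (lam ^ 2 / qf xb Z) • (Z - cp xb) := fun Z _ => inversion_eq xb lam Z
    refine ContinuousOn.congr ?_ this
    refine continuousOn_const.add (ContinuousOn.smul (f := fun Z => lam ^ 2 / qf xb Z) (g := fun Z : Pt n => Z - cp xb) ?_ ?_)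
    · exact continuousOn_const.div (continuous_qf xb).continuousOn
        (fun Z hZ => ne_of_gt hZ)
    · exact (continuous_id.sub continuous_const).continuousOn
  have : {Z : Pt n | 0 < qf xb Z ∧ inversion xb lam Z ∈ Ω} =
      {Z : Pt n | 0 < qf xb Z} ∩ (inversion xb lam) ⁻¹' Ω := rfl
  rw [this]
  exact hco.isOpen_inter_preimage hopen hΩopen

set_option maxHeartbeats 2000000 in
lemma d2_kelvin (σ : ℝ) (U : Pt n → ℝ) (xb : EuclideanSpace ℝ (Fin n)) {lam : ℝ}
    (hlam : 0 < lam) {Ω : Set (Pt n)} (hΩopen : IsOpen Ω) (hU : ContDiffOn ℝ 2 U Ω)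
    (ξ v : Pt n) (hq : 0 < qf xb ξ) (hP : inversion xb lam ξ ∈ Ω)
    (e L r q0 u0 L1z Hzz β ivv L1v Hvv Hzv Hvz : ℝ)
    (he : e = -(((n : ℝ) - 2 * σ) / 2)) (hL : L = lam ^ ((n : ℝ) - 2 * σ))
    (hq0 : q0 = qf xb ξ) (hr : r = q0 ^ (e - 3))
    (hu0 : u0 = U (inversion xb lam ξ))
    (hL1z : L1z = fderiv ℝ U (inversion xb lam ξ) (ξ - cp xb))
    (hHzz : Hzz = fderiv ℝ (fderiv ℝ U) (inversion xb lam ξ) (ξ - cp xb) (ξ - cp xb))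
    (hβ : β = ipp (ξ - cp xb) v) (hivv : ivv = ipp v v)
    (hL1v : L1v = fderiv ℝ U (inversion xb lam ξ) v)
    (hHvv : Hvv = fderiv ℝ (fderiv ℝ U) (inversion xb lam ξ) v v)
    (hHzv : Hzv = fderiv ℝ (fderiv ℝ U) (inversion xb lam ξ) (ξ - cp xb) v)
    (hHvz : Hvz = fderiv ℝ (fderiv ℝ U) (inversion xb lam ξ) v (ξ - cp xb)) :
    d2 (kelvin σ U xb lam) ξ v =
      (4*e*(e-1)*L*r*q0*u0 - (4*e + 4*(e-2))*L*lam^2*r*L1z + 4*L*lam^2*lam^2*(r/q0)*Hzz) * β^2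
      + (2*e*L*r*q0^2*u0 - 2*L*lam^2*r*q0*L1z) * ivv
      + (4*(e-1)*L*lam^2*r*q0) * (β * L1v)
      + (L*lam^2*lam^2*r*q0) * Hvv
      + (-(2*L*lam^2*lam^2*r)) * (β * Hzv)
      + (-(2*L*lam^2*lam^2*r)) * (β * Hvz) := by
  subst he hL hq0 hr hu0 hL1z hHzz hβ hivv hL1v hHvv hHzv hHvz
  set m : ℝ := (n : ℝ) - 2 * σ with hm
  set e : ℝ := -(((n : ℝ) - 2 * σ) / 2) with he
  have hne : qf xb ξ ≠ 0 := ne_of_gt hq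
  -- eventual equality for the first derivative in direction v
  have hWopen := isOpen_W xb lam hΩopen (n := n)
  have hevd : (fun Z => fderiv ℝ (kelvin σ U xb lam) Z v) =ᶠ[𝓝 ξ]
      (fun Z =>
        lam ^ ((n : ℝ) - 2 * σ) * (2 * (-(((n : ℝ) - 2 * σ) / 2))) *
          ((qf xb Z) ^ ((-(((n : ℝ) - 2 * σ) / 2)) - 1) *
            (ipp (Z - cp xb) v * U (inversion xb lam Z)))
        + lam ^ ((n : ℝ) - 2 * σ) * lam ^ 2 *
          ((qf xb Z) ^ ((-(((n : ℝ) - 2 * σ) / 2)) - 1) *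
            fderiv ℝ U (inversion xb lam Z) v)
        - lam ^ ((n : ℝ) - 2 * σ) * (2 * lam ^ 2) *
          ((qf xb Z) ^ ((-(((n : ℝ) - 2 * σ) / 2)) - 2) *
            (ipp (Z - cp xb) v * fderiv ℝ U (inversion xb lam Z) (Z - cp xb)))) :=
    eventually_of_mem (hWopen.mem_nhds ⟨hq, hP⟩)
      (fun Z hZ => fderiv_kelvin σ U xb hlam hΩopen hU Z hZ.1 hZ.2 v)
  rw [d2, hevd.fderiv_eq]
  -- second-order data for U at P
  have hnb : Ω ∈ 𝓝 (inversion xb lam ξ) := hΩopen.mem_nhds hP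
  have hUd : HasFDerivAt U (fderiv ℝ U (inversion xb lam ξ)) (inversion xb lam ξ) :=
    ((hU.contDiffAt hnb).differentiableAt (by norm_num)).hasFDerivAt
  have hU2 : HasFDerivAt (fderiv ℝ U)
      (fderiv ℝ (fderiv ℝ U) (inversion xb lam ξ)) (inversion xb lam ξ) :=
    (((hU.contDiffAt hnb).fderiv_right (m := 1) (by norm_num)).differentiableAt
      one_ne_zero).hasFDerivAt
  obtain ⟨DI, hI, hIw⟩ := hasFDerivAt_inversion xb lam ξ hq
  have hc : HasFDerivAt (fun Z => fderiv ℝ U (inversion xb lam Z))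
      ((fderiv ℝ (fderiv ℝ U) (inversion xb lam ξ)).comp DI) ξ := hU2.comp ξ hI
  have hu0 : HasFDerivAt (fun Z => U (inversion xb lam Z))
      ((fderiv ℝ U (inversion xb lam ξ)).comp DI) ξ := hUd.comp ξ hI
  have hgv : HasFDerivAt (fun Z => fderiv ℝ U (inversion xb lam Z) v) _ ξ :=
    hc.clm_apply (hasFDerivAt_const v ξ)
  have hzf : HasFDerivAt (fun Z : Pt n => Z - cp xb)
      (ContinuousLinearMap.id ℝ (Pt n)) ξ := (hasFDerivAt_id ξ).sub_const _
  have hgz : HasFDerivAt (fun Z => fderiv ℝ U (inversion xb lam Z) (Z - cp xb)) _ ξ :=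
    hc.clm_apply hzf
  have hr1 : HasFDerivAt (fun Z : Pt n => (qf xb Z) ^ (e - 1)) _ ξ :=
    (hasFDerivAt_qf xb ξ).rpow_const (Or.inl hne) (p := e - 1)
  have hr2 : HasFDerivAt (fun Z : Pt n => (qf xb Z) ^ (e - 2)) _ ξ :=
    (hasFDerivAt_qf xb ξ).rpow_const (Or.inl hne) (p := e - 2)
  have hB : HasFDerivAt (fun Z : Pt n => ipp (Z - cp xb) v) (ippL v) ξ :=
    hasFDerivAt_ipp xb v ξ
  have ht1 : HasFDerivAt (fun Z =>
      lam ^ m * (2 * e) * ((qf xb Z) ^ (e - 1) * (ipp (Z - cp xb) v * U (inversion xb lam Z))))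
      _ ξ := (hr1.mul (hB.mul hu0)).const_mul _
  have ht2 : HasFDerivAt (fun Z =>
      lam ^ m * lam ^ 2 * ((qf xb Z) ^ (e - 1) * fderiv ℝ U (inversion xb lam Z) v)) _ ξ :=
    (hr1.mul hgv).const_mul _
  have ht3 : HasFDerivAt (fun Z =>
      lam ^ m * (2 * lam ^ 2) * ((qf xb Z) ^ (e - 2) *
        (ipp (Z - cp xb) v * fderiv ℝ U (inversion xb lam Z) (Z - cp xb)))) _ ξ :=
    (hr2.mul (hB.mul hgz)).const_mul _
  have hbig : HasFDerivAt (fun Z =>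
      lam ^ m * (2 * e) * ((qf xb Z) ^ (e - 1) * (ipp (Z - cp xb) v * U (inversion xb lam Z)))
      + lam ^ m * lam ^ 2 * ((qf xb Z) ^ (e - 1) * fderiv ℝ U (inversion xb lam Z) v)
      - lam ^ m * (2 * lam ^ 2) * ((qf xb Z) ^ (e - 2) *
        (ipp (Z - cp xb) v * fderiv ℝ U (inversion xb lam Z) (Z - cp xb)))) _ ξ :=
    (ht1.add ht2).sub ht3
  rw [hbig.fderiv]
  have hq1 : (qf xb ξ) ^ (e - 1) = (qf xb ξ) ^ (e - 3) * (qf xb ξ) ^ 2 := by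
    rw [show e - 1 = (e - 3) + (2:ℝ) by ring, Real.rpow_add hq, Real.rpow_two, sq]
  have hq2 : (qf xb ξ) ^ (e - 2) = (qf xb ξ) ^ (e - 3) * qf xb ξ := by
    rw [show e - 2 = (e - 3) + (1:ℝ) by ring, Real.rpow_add hq, Real.rpow_one]
  simp only [ContinuousLinearMap.add_apply, ContinuousLinearMap.sub_apply,
    ContinuousLinearMap.smul_apply, ContinuousLinearMap.comp_apply,
    ContinuousLinearMap.coe_comp', Function.comp_apply, ContinuousLinearMap.flip_apply,
    ContinuousLinearMap.zero_apply, ContinuousLinearMap.coe_id', id_eq, ippL_apply,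
    smul_eq_mul, hIw, map_sub, _root_.map_smul, map_zero, add_zero, zero_add,
    ContinuousLinearMap.map_zero, Pi.mul_apply]
  have hq3 : (qf xb ξ) ^ (e - 1 - 1) = (qf xb ξ) ^ (e - 3) * qf xb ξ := by
    rw [show e - 1 - 1 = (e - 3) + (1:ℝ) by ring, Real.rpow_add hq, Real.rpow_one]
  have hq4 : (qf xb ξ) ^ (e - 2 - 1) = (qf xb ξ) ^ (e - 3) := by
    rw [show e - 2 - 1 = e - 3 by ring]
  rw [hq1, hq2, hq3, hq4]
  field_simp
  ring

def bb (i : Fin n) : Pt n := (EuclideanSpace.single i (1 : ℝ), (0 : ℝ))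
def vt : Pt n := (0, 1)

lemma ipp_bb (z : Pt n) (i : Fin n) : ipp z (bb i) = z.1 i := by
  simp [ipp, bb, EuclideanSpace.inner_single_right]

lemma ipp_vt (z : Pt n) : ipp z vt = z.2 := by
  simp [ipp, vt]

lemma ipp_bb_self (i : Fin n) : ipp (bb i) (bb i) = 1 := by
  simp [ipp, bb, EuclideanSpace.inner_single_right, EuclideanSpace.single_apply]

lemma ipp_vt_self : ipp (vt : Pt n) vt = 1 := by simp [ipp, vt]

lemma decomp (z : Pt n) :
    (∑ i : Fin n, (z.1 i) • (bb i)) + z.2 • vt = z := by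
  apply Prod.ext
  · rw [Prod.fst_add, Prod.fst_sum]
    have h2 : (z.2 • (vt : Pt n)).1 = 0 := by simp [vt]
    rw [h2, add_zero]
    have h3 : ∀ i : Fin n, ((z.1 i) • (bb i)).1 = (z.1 i) • EuclideanSpace.single i (1:ℝ) := by
      intro i; simp [bb]
    simp only [h3]
    ext j
    rw [WithLp.ofLp_sum, Finset.sum_apply]
    simp [EuclideanSpace.single_apply]
  · rw [Prod.snd_add, Prod.snd_sum]
    simp [bb, vt]

lemma sum_basis (z : Pt n) (L : Pt n →L[ℝ] ℝ) :
    (∑ i : Fin n, ipp z (bb i) * L (bb i)) + z.2 * L vt = L z := by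
  conv_rhs => rw [← decomp z]
  rw [map_add, map_sum, _root_.map_smul]
  simp only [ipp_bb, _root_.map_smul, smul_eq_mul]

lemma final_sum (z : Pt n) (L1 : Pt n →L[ℝ] ℝ) (H : Pt n →L[ℝ] Pt n →L[ℝ] ℝ)
    (A B C D E F : ℝ) (f : Pt n → ℝ)
    (hf : ∀ v, f v = A * (ipp z v)^2 + B * ipp v v + C * (ipp z v * L1 v)
      + D * (H v v) + E * (ipp z v * H z v) + F * (ipp z v * H v z)) :
    (∑ i : Fin n, f (bb i)) + f vt =
      A * (ipp z z) + B * ((n : ℝ) + 1) + C * L1 z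
      + D * ((∑ i : Fin n, H (bb i) (bb i)) + H vt vt) + E * (H z z) + F * (H z z) := by
  have h1 := sum_basis z (ippL z)
  have h2 := sum_basis z L1
  have h3 := sum_basis z (H z)
  have h4 := sum_basis z (H.flip z)
  simp only [ippL_apply, ContinuousLinearMap.flip_apply] at h1 h3 h4
  have h5 : (∑ i : Fin n, ipp (bb i) (bb i)) = (n : ℝ) := by
    simp [ipp_bb_self]
  have hvt2 : (vt : Pt n).2 = 1 := rfl
  simp only [hf, pow_two, ipp_vt, ipp_vt_self, hvt2] 
  simp only [ipp_vt] at h1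
  rw [Finset.sum_add_distrib, Finset.sum_add_distrib, Finset.sum_add_distrib,
    Finset.sum_add_distrib, Finset.sum_add_distrib,
    ← Finset.mul_sum, ← Finset.mul_sum, ← Finset.mul_sum, ← Finset.mul_sum,
    ← Finset.mul_sum, ← Finset.mul_sum]
  linear_combination A * h1 + C * h2 + E * h3 + F * h4 + B * h5

lemma d2_eq (U : Pt n → ℝ) {Ω : Set (Pt n)} (hΩopen : IsOpen Ω) (hU : ContDiffOn ℝ 2 U Ω)
    {P : Pt n} (hP : P ∈ Ω) (w : Pt n) :
    d2 U P w = fderiv ℝ (fderiv ℝ U) P w w := by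
  have hnb : Ω ∈ 𝓝 P := hΩopen.mem_nhds hP
  have hU2 : HasFDerivAt (fderiv ℝ U) (fderiv ℝ (fderiv ℝ U) P) P :=
    (((hU.contDiffAt hnb).fderiv_right (m := 1) (by norm_num)).differentiableAt
      one_ne_zero).hasFDerivAt
  have h := hU2.clm_apply (hasFDerivAt_const w P)
  rw [d2, h.fderiv]
  simp

lemma inversion_snd (xb : EuclideanSpace ℝ (Fin n)) (lam : ℝ) (ξ : Pt n) :
    (inversion xb lam ξ).2 = lam ^ 2 / qf xb ξ * ξ.2 := by
  rw [inversion_eq]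
  simp [cp]

end S14

/-- The degenerate equation `ΔU + ((1-2σ)/t)∂_t U = 0` is invariant
under the Kelvin transform with respect to balls centered on the boundary hyperplane. -/
theorem stmt_14 (n : ℕ) (hn : 2 ≤ n) (σ : ℝ) (hσ : σ ∈ Set.Ioo (0 : ℝ) 1)
    (Ω : Set (Pt n)) (hΩopen : IsOpen Ω) (hΩ : Ω ⊆ {X : Pt n | 0 < X.2})
    (U : Pt n → ℝ) (hU : ContDiffOn ℝ 2 U Ω)
    (heq : ∀ X ∈ Ω, lapl U X + ((1 - 2 * σ) / X.2) * dt U X = 0)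
    (xb : EuclideanSpace ℝ (Fin n)) (lam : ℝ) (hlam : 0 < lam) :
    ∀ ξ : Pt n, 0 < ξ.2 → ξ ≠ ((xb, (0 : ℝ)) : Pt n) → inversion xb lam ξ ∈ Ω →
      lapl (kelvin σ U xb lam) ξ + ((1 - 2 * σ) / ξ.2) * dt (kelvin σ U xb lam) ξ = 0 := by
  intro ξ hs hne hmem
  have hq : 0 < S14.qf xb ξ := by
    have h2 : 0 < ξ.2 ^ 2 := pow_pos hs 2
    have h1 : 0 ≤ ‖ξ.1 - xb‖ ^ 2 := by positivity
    simp only [S14.qf]; linarith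
  have hqne : S14.qf xb ξ ≠ 0 := ne_of_gt hq
  have hd2 := fun v : Pt n => S14.d2_kelvin σ U xb hlam hΩopen hU ξ v hq hmem
    _ _ _ _ _ _ _ _ _ _ _ _ _ rfl rfl rfl rfl rfl rfl rfl rfl rfl rfl rfl rfl rfl
  have hsum := S14.final_sum (ξ - S14.cp xb) (fderiv ℝ U (inversion xb lam ξ))
    (fderiv ℝ (fderiv ℝ U) (inversion xb lam ξ)) _ _ _ _ _ _
    (d2 (kelvin σ U xb lam) ξ) hd2
  have hlaplU : (∑ i : Fin n, fderiv ℝ (fderiv ℝ U) (inversion xb lam ξ) (S14.bb i) (S14.bb i))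
      + fderiv ℝ (fderiv ℝ U) (inversion xb lam ξ) S14.vt S14.vt = lapl U (inversion xb lam ξ) := by
    have h1 : lapl U (inversion xb lam ξ) =
        (∑ i : Fin n, d2 U (inversion xb lam ξ) (S14.bb i)) + d2 U (inversion xb lam ξ) S14.vt := rfl
    rw [h1, Finset.sum_congr rfl (fun i _ => S14.d2_eq U hΩopen hU hmem (S14.bb i)),
      S14.d2_eq U hΩopen hU hmem S14.vt]
  rw [hlaplU] at hsum
  have hpde := heq _ hmem
  have hP2 : (inversion xb lam ξ).2 = lam ^ 2 / S14.qf xb ξ * ξ.2 := S14.inversion_snd xb lam ξ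
  have hdtU : dt U (inversion xb lam ξ) = fderiv ℝ U (inversion xb lam ξ) S14.vt := rfl
  rw [hP2, hdtU] at hpde
  have hT : lapl U (inversion xb lam ξ) =
      -((1 - 2 * σ) / (lam ^ 2 / S14.qf xb ξ * ξ.2)) *
        fderiv ℝ U (inversion xb lam ξ) S14.vt := by linarith
  rw [hT] at hsum
  have hlapl : lapl (kelvin σ U xb lam) ξ =
      (∑ i : Fin n, d2 (kelvin σ U xb lam) ξ (S14.bb i)) + d2 (kelvin σ U xb lam) ξ S14.vt := rfl
  have hdt : dt (kelvin σ U xb lam) ξ = fderiv ℝ (kelvin σ U xb lam) ξ S14.vt := rfl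
  rw [hlapl, hsum, hdt, S14.fderiv_kelvin σ U xb hlam hΩopen hU ξ hq hmem S14.vt]
  have hq0 : S14.ipp (ξ - S14.cp xb) (ξ - S14.cp xb) = S14.qf xb ξ := (S14.qf_eq_ipp xb ξ).symm
  have hzvt : S14.ipp (ξ - S14.cp xb) S14.vt = ξ.2 := by
    rw [S14.ipp_vt, S14.sub_cp_snd, sub_zero]
  have hq1 : (S14.qf xb ξ) ^ (-(((n:ℝ) - 2*σ)/2) - 1) =
      (S14.qf xb ξ) ^ (-(((n:ℝ) - 2*σ)/2) - 3) * (S14.qf xb ξ) ^ 2 := by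
    rw [show -(((n:ℝ) - 2*σ)/2) - 1 = (-(((n:ℝ) - 2*σ)/2) - 3) + (2:ℝ) by ring,
      Real.rpow_add hq, Real.rpow_two, sq]
  have hq2 : (S14.qf xb ξ) ^ (-(((n:ℝ) - 2*σ)/2) - 2) =
      (S14.qf xb ξ) ^ (-(((n:ℝ) - 2*σ)/2) - 3) * (S14.qf xb ξ) := by
    rw [show -(((n:ℝ) - 2*σ)/2) - 2 = (-(((n:ℝ) - 2*σ)/2) - 3) + (1:ℝ) by ring,
      Real.rpow_add hq, Real.rpow_one]
  rw [hq0, hzvt, hq1, hq2]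
  have hsne : ξ.2 ≠ 0 := ne_of_gt hs
  have hlamne : lam ≠ 0 := ne_of_gt hlam
  field_simp
  ring
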